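/- Let R be a commutative ring, n ≥ 0, and let s₀,…,sₙ ∈ R generate the unit ideal. Fix m ≥ 1 and let D_m denote the set of exponent vectors d : {0,…,n} → ℕ with Σ_i d(i) = m. Consider the R-linear map f : R^(D_m) → R defined on basis vectors by f(e_d) = Π_i s_i^{d(i)}, and the R-linear map g : R^(D_{m−1} × {(i,j) : 0 ≤ i < j ≤ n}) → R^(D_m) defined by g(e_{q,i,j}) = s_i · e_{q+δ_j} − s_j · e_{q+δ_i}, where δ_i is the i-th standard exponent vector. Then f is surjective and the kernel of f equals the image of g. -/

import Mathlib

/-- Exponent vectors `d : Fin (n+1) →₀ ℕ` of total degree `k`. -/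
def ExpVec (n k : ℕ) : Type :=
  {d : Fin (n + 1) →₀ ℕ // d.sum (fun _ v => v) = k}

/-- Adding `1` to the `i`-th entry of an exponent vector of degree `k` gives one of degree
`k + 1`. -/
noncomputable def ExpVec.addVar {n k : ℕ} (q : ExpVec n k) (i : Fin (n + 1)) :
    ExpVec n (k + 1) :=
  ⟨q.1 + Finsupp.single i 1, by
    rw [Finsupp.sum_add_index' (fun _ => rfl) (fun _ _ _ => rfl), q.2,
      Finsupp.sum_single_index rfl]⟩


/-- total degree of an exponent vector -/
def myDeg {n : ℕ} (d : Fin (n + 1) →₀ ℕ) : ℕ := d.sum (fun _ v => v)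

lemma myDeg_add {n : ℕ} (q p : Fin (n + 1) →₀ ℕ) : myDeg (q + p) = myDeg q + myDeg p :=
  Finsupp.sum_add_index' (fun _ => rfl) (fun _ _ _ => rfl)

lemma myDeg_single {n : ℕ} (i : Fin (n + 1)) (k : ℕ) : myDeg (Finsupp.single i k) = k :=
  Finsupp.sum_single_index rfl

lemma myDeg_eq_zero {n : ℕ} (q : Fin (n + 1) →₀ ℕ) (h : myDeg q = 0) : q = 0 := by
  ext i
  by_cases hi : q i = 0
  · simpa using hi
  · exfalso
    have := Finset.sum_eq_zero_iff.mp h i (Finsupp.mem_support_iff.mpr hi)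
    exact hi this

lemma prod_pow_add_single {R : Type*} [CommRing R] {n : ℕ} (s : Fin (n + 1) → R)
    (q : Fin (n + 1) →₀ ℕ) (j : Fin (n + 1)) :
    (∏ l, s l ^ ((q + Finsupp.single j 1 : Fin (n+1) →₀ ℕ) l)) = (∏ l, s l ^ q l) * s j := by
  rw [Finset.prod_congr rfl (fun l _ => by rw [Finsupp.add_apply, pow_add]),
    Finset.prod_mul_distrib]
  congr 1
  rw [Finset.prod_eq_single j (fun b _ hb => by simp [Finsupp.single_apply, Ne.symm hb])
    (by simp)]
  simp

lemma prod_pow_single {R : Type*} [CommRing R] {n : ℕ} (s : Fin (n + 1) → R)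
    (i : Fin (n + 1)) (k : ℕ) :
    (∏ l, s l ^ (Finsupp.single i k : Fin (n+1) →₀ ℕ) l) = s i ^ k := by
  rw [Finset.prod_eq_single i (fun b _ hb => by simp [Finsupp.single_apply, Ne.symm hb])
    (by simp)]
  simp

noncomputable def E' {R : Type*} [CommRing R] {n m : ℕ} (d : Fin (n + 1) →₀ ℕ)
    (h : myDeg d = m + 1) : ExpVec n (m + 1) →₀ R := Finsupp.single ⟨d, h⟩ 1

lemma E'_congr {R : Type*} [CommRing R] {n m : ℕ} {d d' : Fin (n + 1) →₀ ℕ}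
    {h : myDeg d = m + 1} {h' : myDeg d' = m + 1} (e : d = d') :
    (E' d h : ExpVec n (m+1) →₀ R) = E' d' h' := by subst e; rfl

lemma key_lemma {R : Type*} [CommRing R] {n m : ℕ} (s : Fin (n + 1) → R)
    (N : Submodule R (ExpVec n (m + 1) →₀ R))
    (hrel : ∀ (q : Fin (n + 1) →₀ ℕ), myDeg q = m → ∀ (i j : Fin (n + 1))
      (h1 : myDeg (q + Finsupp.single j 1) = m + 1)
      (h2 : myDeg (q + Finsupp.single i 1) = m + 1),
      s i • E' (q + Finsupp.single j 1) h1 - s j • E' (q + Finsupp.single i 1) h2 ∈ N) :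
    ∀ (k : ℕ) (q q' p : Fin (n + 1) →₀ ℕ), myDeg q = k → myDeg q' = k →
      ∀ (h : myDeg (q + p) = m + 1) (h' : myDeg (q' + p) = m + 1),
      (∏ i, s i ^ q' i) • E' (q + p) h - (∏ i, s i ^ q i) • E' (q' + p) h' ∈ N := by
  intro k
  induction k with
  | zero =>
    intro q q' p hq hq' h h'
    have hq0 : q = 0 := myDeg_eq_zero q hq
    have hq'0 : q' = 0 := myDeg_eq_zero q' hq'
    subst hq0; subst hq'0
    have : (E' (0 + p) h : ExpVec n (m+1) →₀ R) = E' (0 + p) h' := rfl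
    rw [this]
    simp
  | succ k ih =>
    intro q q' p hq hq' h h'
    obtain ⟨i, hi⟩ : ∃ i, q i ≠ 0 := by
      by_contra hc
      push_neg at hc
      have : q = 0 := Finsupp.ext fun a => hc a
      rw [this] at hq
      simp [myDeg] at hq
    obtain ⟨j, hj⟩ : ∃ j, q' j ≠ 0 := by
      by_contra hc
      push_neg at hc
      have : q' = 0 := Finsupp.ext fun a => hc a
      rw [this] at hq'
      simp [myDeg] at hq'
    have hle : Finsupp.single i 1 ≤ q := Finsupp.single_le_iff.mpr (Nat.one_le_iff_ne_zero.mpr hi)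
    have hle' : Finsupp.single j 1 ≤ q' := Finsupp.single_le_iff.mpr (Nat.one_le_iff_ne_zero.mpr hj)
    set q1 := q - Finsupp.single i 1 with hq1def
    set q2 := q' - Finsupp.single j 1 with hq2def
    have hq1 : q1 + Finsupp.single i 1 = q := tsub_add_cancel_of_le hle
    have hq1' : q2 + Finsupp.single j 1 = q' := tsub_add_cancel_of_le hle'
    have hdq1 : myDeg q1 = k := by
      have := myDeg_add q1 (Finsupp.single i 1)
      rw [hq1, myDeg_single, hq] at this
      omega
    have hdq1' : myDeg q2 = k := by
      have := myDeg_add q2 (Finsupp.single j 1)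
      rw [hq1', myDeg_single, hq'] at this
      omega
    have hkm : k ≤ m := by rw [myDeg_add, hq] at h; omega
    have hdp : myDeg p = m - k := by rw [myDeg_add, hq] at h; omega
    have hb : myDeg (q1 + p) = m := by rw [myDeg_add, hdq1]; omega
    have hZ : myDeg (q1 + p + Finsupp.single j 1) = m + 1 := by
      rw [myDeg_add, hb, myDeg_single]
    have hX : myDeg (q1 + p + Finsupp.single i 1) = m + 1 := by
      rw [myDeg_add, hb, myDeg_single]
    have hZ2 : myDeg (q1 + (Finsupp.single j 1 + p)) = m + 1 := by
      rw [myDeg_add, hdq1, myDeg_add, myDeg_single]; omega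
    have hY2 : myDeg (q2 + (Finsupp.single j 1 + p)) = m + 1 := by
      rw [myDeg_add, hdq1', myDeg_add, myDeg_single]; omega
    have hprodq : (∏ l, s l ^ q l) = (∏ l, s l ^ q1 l) * s i := by
      rw [← hq1]; exact prod_pow_add_single s q1 i
    have hprodq' : (∏ l, s l ^ q' l) = (∏ l, s l ^ q2 l) * s j := by
      rw [← hq1']; exact prod_pow_add_single s q2 j
    have eX : (E' (q1 + p + Finsupp.single i 1) hX : ExpVec n (m+1) →₀ R) = E' (q + p) h :=
      E'_congr (by rw [← hq1]; abel)
    have eZ : (E' (q1 + (Finsupp.single j 1 + p)) hZ2 : ExpVec n (m+1) →₀ R)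
        = E' (q1 + p + Finsupp.single j 1) hZ := E'_congr (by abel)
    have eY : (E' (q2 + (Finsupp.single j 1 + p)) hY2 : ExpVec n (m+1) →₀ R)
        = E' (q' + p) h' := E'_congr (by rw [← hq1']; abel)
    have mem1 : s i • (E' (q1 + p + Finsupp.single j 1) hZ : ExpVec n (m+1) →₀ R)
        - s j • E' (q + p) h ∈ N := by
      have := hrel (q1 + p) hb i j hZ hX
      rwa [eX] at this
    have mem2 : (∏ l, s l ^ q2 l) • (E' (q1 + p + Finsupp.single j 1) hZ : ExpVec n (m+1) →₀ R)
        - (∏ l, s l ^ q1 l) • E' (q' + p) h' ∈ N := by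
      have := ih q1 q2 (Finsupp.single j 1 + p) hdq1 hdq1' hZ2 hY2
      rwa [eZ, eY] at this
    have memtot := N.add_mem (N.neg_mem (N.smul_mem (∏ l, s l ^ q2 l) mem1))
      (N.smul_mem (s i) mem2)
    convert memtot using 1
    rw [hprodq, hprodq']
    module

/-- Let `R` be a commutative ring and `s₀,…,sₙ ∈ R` generate the unit ideal. Fix `m + 1 ≥ 1`.
Let `f : R^{D_{m+1}} → R`, `e_d ↦ Π_i s_i^{d i}` and
`g : R^{D_m × {(i,j) : i < j}} → R^{D_{m+1}}`, `e_{q,i,j} ↦ s_i • e_{q+δ_j} - s_j • e_{q+δ_i}`.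
Then `f` is surjective and `ker f = im g`. -/
theorem stmt_8 (R : Type*) [CommRing R] (n : ℕ) (s : Fin (n + 1) → R)
    (hs : Ideal.span (Set.range s) = ⊤) (m : ℕ)
    (f : (ExpVec n (m + 1) →₀ R) →ₗ[R] R)
    (g : ((ExpVec n m × {p : Fin (n + 1) × Fin (n + 1) // p.1 < p.2}) →₀ R)
        →ₗ[R] (ExpVec n (m + 1) →₀ R))
    (hf : ∀ d : ExpVec n (m + 1), f (Finsupp.single d 1) = ∏ i, s i ^ d.1 i)
    (hg : ∀ (q : ExpVec n m) (ij : {p : Fin (n + 1) × Fin (n + 1) // p.1 < p.2}),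
      g (Finsupp.single (q, ij) 1) =
        s ij.1.1 • Finsupp.single (q.addVar ij.1.2) (1 : R)
          - s ij.1.2 • Finsupp.single (q.addVar ij.1.1) (1 : R)) :
    Function.Surjective f ∧ LinearMap.ker f = LinearMap.range g := by
  classical
  set N := LinearMap.range g with hN
  -- coefficients expressing 1 as a combination of s i ^ (m+1)
  have hpow : Ideal.span (Set.range fun i => s i ^ (m + 1)) = ⊤ := by
    have h2 := Ideal.span_pow_eq_top (Set.range s) hs (m + 1)
    rwa [← Set.range_comp] at h2
  have h1 : (1 : R) ∈ Ideal.span (Set.range fun i => s i ^ (m + 1)) := by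
    rw [hpow]; trivial
  obtain ⟨c, hc⟩ := (Submodule.mem_span_range_iff_exists_fun R).mp h1
  have hdi : ∀ i : Fin (n + 1), myDeg (Finsupp.single i (m + 1)) = m + 1 :=
    fun i => myDeg_single i (m + 1)
  set z : ExpVec n (m + 1) →₀ R :=
    ∑ i, c i • E' (Finsupp.single i (m + 1)) (hdi i) with hz
  have hfE : ∀ (d : Fin (n + 1) →₀ ℕ) (h : myDeg d = m + 1),
      f (E' d h) = ∏ l, s l ^ d l := fun d h => hf ⟨d, h⟩
  have hfz : f z = 1 := by
    rw [hz, map_sum]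
    rw [Finset.sum_congr rfl fun i _ => by
      rw [map_smul, hfE, prod_pow_single, smul_eq_mul]]
    rw [← hc]
    exact Finset.sum_congr rfl fun i _ => (smul_eq_mul _ _).symm
  have hsurj : Function.Surjective f := by
    intro r
    exact ⟨r • z, by rw [map_smul, hfz, smul_eq_mul, mul_one]⟩
  -- the relations lie in N
  have hrel : ∀ (q : Fin (n + 1) →₀ ℕ), myDeg q = m → ∀ (i j : Fin (n + 1))
      (h1 : myDeg (q + Finsupp.single j 1) = m + 1)
      (h2 : myDeg (q + Finsupp.single i 1) = m + 1),
      s i • E' (q + Finsupp.single j 1) h1 - s j • E' (q + Finsupp.single i 1) h2 ∈ N := by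
    intro q hq i j ha hb
    rcases lt_trichotomy i j with hij | hij | hij
    · refine ⟨Finsupp.single (⟨q, hq⟩, ⟨(i, j), hij⟩) 1, ?_⟩
      refine (hg _ _).trans ?_
      rfl
    · subst hij
      have : (E' (q + Finsupp.single i 1) ha : ExpVec n (m + 1) →₀ R)
          = E' (q + Finsupp.single i 1) hb := rfl
      rw [this, sub_self]
      exact N.zero_mem
    · have hmem : s j • (E' (q + Finsupp.single i 1) hb : ExpVec n (m + 1) →₀ R)
          - s i • E' (q + Finsupp.single j 1) ha ∈ N := by
        refine ⟨Finsupp.single (⟨q, hq⟩, ⟨(j, i), hij⟩) 1, ?_⟩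
        refine (hg _ _).trans ?_
        rfl
      have := N.neg_mem hmem
      rwa [neg_sub] at this
  have key := key_lemma s N hrel
  -- core computation: each basis vector is congruent to (its image) • z mod N
  have core : ∀ d : ExpVec n (m + 1),
      Finsupp.single d (1 : R) - f (Finsupp.single d 1) • z ∈ N := by
    intro d
    rw [hf d]
    have hmem : ∀ i : Fin (n + 1),
        (s i ^ (m + 1)) • Finsupp.single d (1 : R)
          - (∏ l, s l ^ d.1 l) • E' (Finsupp.single i (m + 1)) (hdi i) ∈ N := by
      intro i
      have h0 : myDeg (d.1 + 0) = m + 1 := by rw [add_zero]; exact d.2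
      have h0' : myDeg (Finsupp.single i (m + 1) + 0) = m + 1 := by
        rw [add_zero]; exact hdi i
      have := key (m + 1) d.1 (Finsupp.single i (m + 1)) 0 d.2 (hdi i) h0 h0'
      have e1 : (E' (d.1 + 0) h0 : ExpVec n (m + 1) →₀ R) = Finsupp.single d 1 := by
        rw [E'_congr (add_zero d.1) (h' := d.2)]
        rfl
      have e2 : (E' (Finsupp.single i (m + 1) + 0) h0' : ExpVec n (m + 1) →₀ R)
          = E' (Finsupp.single i (m + 1)) (hdi i) := E'_congr (add_zero _)
      rwa [e1, e2, prod_pow_single] at this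
    have heq : Finsupp.single d (1 : R) - (∏ l, s l ^ d.1 l) • z
        = ∑ i, c i • ((s i ^ (m + 1)) • Finsupp.single d (1 : R)
          - (∏ l, s l ^ d.1 l) • E' (Finsupp.single i (m + 1)) (hdi i)) := by
      rw [Finset.sum_congr rfl fun i _ => smul_sub (c i) _ _, Finset.sum_sub_distrib]
      congr 1
      · have hc' : ∑ i, c i * s i ^ (m + 1) = 1 := by
          simpa only [smul_eq_mul] using hc
        rw [Finset.sum_congr rfl fun i _ => (smul_smul (c i) _ _),
          ← Finset.sum_smul, hc', one_smul]
      · rw [hz, Finset.smul_sum]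
        exact Finset.sum_congr rfl fun i _ => (smul_comm _ _ _)
    rw [heq]
    exact N.sum_mem fun i _ => N.smul_mem (c i) (hmem i)
  have claim : ∀ x : ExpVec n (m + 1) →₀ R, x - f x • z ∈ N := by
    intro x
    induction x using Finsupp.induction_linear with
    | zero => rw [map_zero, zero_smul, sub_zero]; exact N.zero_mem
    | add u v hu hv =>
      have : u + v - f (u + v) • z = (u - f u • z) + (v - f v • z) := by
        rw [map_add, add_smul]; abel
      rw [this]
      exact N.add_mem hu hv
    | single d r =>
      have h1 : Finsupp.single d r = r • Finsupp.single d (1 : R) := by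
        rw [Finsupp.smul_single', mul_one]
      have : Finsupp.single d r - f (Finsupp.single d r) • z
          = r • (Finsupp.single d (1 : R) - f (Finsupp.single d 1) • z) := by
        rw [h1, map_smul, smul_eq_mul, smul_sub, smul_smul]
      rw [this]
      exact N.smul_mem r (core d)
  refine ⟨hsurj, le_antisymm ?_ ?_⟩
  · intro x hx
    have hx0 : f x = 0 := hx
    have := claim x
    rwa [hx0, zero_smul, sub_zero] at this
  · refine LinearMap.range_le_ker_iff.mpr ?_
    apply Finsupp.lhom_ext
    rintro ⟨q, ij⟩ b
    have hb : (Finsupp.single (q, ij) b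
        : (ExpVec n m × {p : Fin (n + 1) × Fin (n + 1) // p.1 < p.2}) →₀ R)
        = b • Finsupp.single (q, ij) 1 := by rw [Finsupp.smul_single', mul_one]
    rw [LinearMap.comp_apply, hb, map_smul, map_smul, hg, map_sub, map_smul, map_smul,
      hf, hf]
    have e1 : (∏ l, s l ^ (q.addVar ij.1.2).1 l) = (∏ l, s l ^ q.1 l) * s ij.1.2 :=
      prod_pow_add_single s q.1 ij.1.2
    have e2 : (∏ l, s l ^ (q.addVar ij.1.1).1 l) = (∏ l, s l ^ q.1 l) * s ij.1.1 :=
      prod_pow_add_single s q.1 ij.1.1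
    rw [e1, e2]
    simp only [smul_eq_mul, LinearMap.zero_apply]
    ring
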